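/- Let σ* be an isolated Nash equilibrium of a finite game G. Then there exists ε̄ > 0 such that for every Nash equilibrium σ ≠ σ* of G there exist two distinct players n₁, n₂ such that for each i = 1,2 there is a pure strategy s_{n_i} in the support of σ*_{n_i} with σ_{n_i}(s_{n_i}) < σ*_{n_i}(s_{n_i}) − ε̄. -/

import Mathlib

open Finset

variable {N : ℕ} {S : Fin N → Type*} [∀ n, Fintype (S n)] [∀ n, DecidableEq (S n)]

/-- The mixed-strategy profile `σ` lies in `Σ = Π_n Σ_n` (a product of simplices). -/
def InSimplex (σ : ∀ n, S n → ℝ) : Prop :=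
  (∀ n s, 0 ≤ σ n s) ∧ ∀ n, ∑ s, σ n s = 1

/-- A pure strategy viewed as a mixed strategy (Dirac distribution). -/
noncomputable def pureStrat {n : Fin N} (a : S n) : S n → ℝ :=
  fun b => if b = a then 1 else 0

/-- Multilinear extension of the payoff `u n` of player `n` to mixed profiles. -/
noncomputable def expPay (u : ∀ _ : Fin N, (∀ m, S m) → ℝ)
    (σ : ∀ n, S n → ℝ) (n : Fin N) : ℝ :=
  ∑ s : ∀ m, S m, (∏ m, σ m (s m)) * u n s

/-- `G_n(a, σ_{-n})`: player `n`'s payoff from the pure strategy `a` against `σ_{-n}`. -/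
noncomputable def devPay (u : ∀ _ : Fin N, (∀ m, S m) → ℝ)
    (σ : ∀ n, S n → ℝ) (n : Fin N) (a : S n) : ℝ :=
  expPay u (Function.update σ n (pureStrat a)) n

/-- `σ` is a Nash equilibrium. -/
def IsNashEq (u : ∀ _ : Fin N, (∀ m, S m) → ℝ) (σ : ∀ n, S n → ℝ) : Prop :=
  InSimplex σ ∧ ∀ n (a : S n), devPay u σ n a ≤ expPay u σ n

/-- `φ_{n,s_n}(σ) = max {0, G_n(s_n, σ_{-n}) − G_n(σ)}`. -/
noncomputable def phi (u : ∀ _ : Fin N, (∀ m, S m) → ℝ)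
    (σ : ∀ n, S n → ℝ) (n : Fin N) (a : S n) : ℝ :=
  max 0 (devPay u σ n a - expPay u σ n)

/-- Nash's map `f`. -/
noncomputable def nashMap (u : ∀ _ : Fin N, (∀ m, S m) → ℝ)
    (σ : ∀ n, S n → ℝ) : ∀ n, S n → ℝ :=
  fun n a => (σ n a + phi u σ n a) / (1 + ∑ t, phi u σ n t)


set_option maxHeartbeats 1000000 in
set_option linter.unusedSectionVars false in
lemma expPay_update_lin (u : ∀ _ : Fin N, (∀ m, S m) → ℝ) (σ : ∀ n, S n → ℝ)
    (n m : Fin N) (x y : S n → ℝ) (a b : ℝ) :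
    expPay u (Function.update σ n (fun s => a * x s + b * y s)) m
      = a * expPay u (Function.update σ n x) m + b * expPay u (Function.update σ n y) m := by
  have key : ∀ (z : S n → ℝ) (s : ∀ m, S m),
      (∏ m', Function.update σ n z m' (s m'))
        = z (s n) * ∏ m' ∈ Finset.univ.erase n, σ m' (s m') := by
    intro z s
    rw [← Finset.mul_prod_erase Finset.univ _ (Finset.mem_univ n), Function.update_self]
    congr 1
    refine Finset.prod_congr rfl fun m' hm' => ?_
    rw [Function.update_of_ne (Finset.ne_of_mem_erase hm')]
  simp only [expPay, key]
  rw [Finset.mul_sum, Finset.mul_sum, ← Finset.sum_add_distrib]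
  exact Finset.sum_congr rfl fun s _ => by ring

lemma combo_isNash (u : ∀ _ : Fin N, (∀ m, S m) → ℝ) {σ τ : ∀ n, S n → ℝ}
    (hσ : IsNashEq u σ) (hτ : IsNashEq u τ) (n : Fin N)
    (hagree : ∀ m, m ≠ n → σ m = τ m) {t : ℝ} (ht0 : 0 ≤ t) (ht1 : t ≤ 1) :
    IsNashEq u (fun m s => (1 - t) * σ m s + t * τ m s) := by
  set c : ∀ m, S m → ℝ := fun m s => (1 - t) * σ m s + t * τ m s with hc
  have hcm : ∀ m, m ≠ n → c m = σ m := by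
    intro m hm
    funext s
    rw [hc]
    simp only
    rw [← hagree m hm]
    ring
  have hceq : c = Function.update σ n (fun s => (1 - t) * σ n s + t * τ n s) := by
    funext m
    rcases eq_or_ne m n with rfl | hm
    · rw [Function.update_self]
    · rw [Function.update_of_ne hm]; exact hcm m hm
  have hτeq : Function.update σ n (τ n) = τ := by
    funext m
    rcases eq_or_ne m n with rfl | hm
    · rw [Function.update_self]
    · rw [Function.update_of_ne hm]; exact hagree m hm
  have hexp : ∀ m, expPay u c m = (1 - t) * expPay u σ m + t * expPay u τ m := by
    intro m
    rw [hceq, expPay_update_lin, Function.update_eq_self, hτeq]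
  refine ⟨⟨?_, ?_⟩, ?_⟩
  · intro m s
    exact add_nonneg (mul_nonneg (by linarith) (hσ.1.1 m s)) (mul_nonneg ht0 (hτ.1.1 m s))
  · intro m
    rw [hc]
    simp only
    rw [Finset.sum_add_distrib, ← Finset.mul_sum, ← Finset.mul_sum, hσ.1.2 m, hτ.1.2 m]
    ring
  · intro m a
    rcases eq_or_ne m n with rfl | hmn
    · -- deviation by player n
      have e1 : Function.update c m (pureStrat a) = Function.update σ m (pureStrat a) := by
        funext m'
        rcases eq_or_ne m' m with rfl | hm'
        · rw [Function.update_self, Function.update_self]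
        · rw [Function.update_of_ne hm', Function.update_of_ne hm']
          exact hcm m' hm'
      have e2 : Function.update c m (pureStrat a) = Function.update τ m (pureStrat a) := by
        funext m'
        rcases eq_or_ne m' m with rfl | hm'
        · rw [Function.update_self, Function.update_self]
        · rw [Function.update_of_ne hm', Function.update_of_ne hm']
          rw [hcm m' hm']; exact hagree m' hm'
      have d1 : devPay u c m a = devPay u σ m a := by
        simp only [devPay, e1]
      have d2 : devPay u σ m a = devPay u τ m a := by
        simp only [devPay, ← e1, e2]
      calc devPay u c m a = (1 - t) * devPay u σ m a + t * devPay u τ m a := by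
            rw [d1, d2]; ring
        _ ≤ (1 - t) * expPay u σ m + t * expPay u τ m :=
            add_le_add (mul_le_mul_of_nonneg_left (hσ.2 m a) (by linarith))
              (mul_le_mul_of_nonneg_left (hτ.2 m a) ht0)
        _ = expPay u c m := (hexp m).symm
    · -- deviation by player m ≠ n
      set ρ : ∀ m, S m → ℝ := Function.update σ m (pureStrat a) with hρ
      have hnm : n ≠ m := fun h => hmn h.symm
      have e1 : Function.update c m (pureStrat a)
          = Function.update ρ n (fun s => (1 - t) * σ n s + t * τ n s) := by
        funext m'
        rcases eq_or_ne m' n with rfl | hm'n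
        · rw [Function.update_of_ne hnm, Function.update_self]
        · rw [Function.update_of_ne hm'n]
          rcases eq_or_ne m' m with rfl | hm'm
          · rw [Function.update_self, hρ, Function.update_self]
          · rw [Function.update_of_ne hm'm, hρ, Function.update_of_ne hm'm]
            exact hcm m' hm'n
      have e2 : Function.update ρ n (σ n) = ρ := by
        rw [show σ n = ρ n from (Function.update_of_ne hnm _ _).symm, Function.update_eq_self]
      have e3 : Function.update ρ n (τ n) = Function.update τ m (pureStrat a) := by
        funext m'
        rcases eq_or_ne m' n with rfl | hm'n
        · rw [Function.update_self, Function.update_of_ne hnm]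
        · rw [Function.update_of_ne hm'n]
          rcases eq_or_ne m' m with rfl | hm'm
          · rw [hρ, Function.update_self, Function.update_self]
          · rw [hρ, Function.update_of_ne hm'm, Function.update_of_ne hm'm]
            exact hagree m' hm'n
      have dlin : devPay u c m a = (1 - t) * devPay u σ m a + t * devPay u τ m a := by
        simp only [devPay, ← hρ, e1]
        rw [expPay_update_lin, e2, e3]
      calc devPay u c m a = (1 - t) * devPay u σ m a + t * devPay u τ m a := dlin
        _ ≤ (1 - t) * expPay u σ m + t * expPay u τ m :=
            add_le_add (mul_le_mul_of_nonneg_left (hσ.2 m a) (by linarith))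
              (mul_le_mul_of_nonneg_left (hτ.2 m a) ht0)
        _ = expPay u c m := (hexp m).symm

set_option linter.unusedSectionVars false in
lemma two_diff (u : ∀ _ : Fin N, (∀ m, S m) → ℝ) (σstar : ∀ n, S n → ℝ)
    (hNash : IsNashEq u σstar) {δ : ℝ} (hδ : 0 < δ)
    (hiso : ∀ σ, IsNashEq u σ → dist σ σstar < δ → σ = σstar)
    (σ : ∀ n, S n → ℝ) (hσ : IsNashEq u σ) (hne : σ ≠ σstar) :
    ∃ n₁ n₂ : Fin N, n₁ ≠ n₂ ∧ σ n₁ ≠ σstar n₁ ∧ σ n₂ ≠ σstar n₂ := by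
  have hd : 0 < dist σ σstar := dist_pos.mpr hne
  obtain ⟨n₁, hn₁⟩ : ∃ n, σ n ≠ σstar n := by
    by_contra h
    push_neg at h
    exact hne (funext h)
  by_contra hcon
  push_neg at hcon
  have hag : ∀ m, m ≠ n₁ → σstar m = σ m := by
    intro m hm
    exact (hcon n₁ m (Ne.symm hm) hn₁).symm
  set t : ℝ := min (1 / 2) (δ / (2 * dist σ σstar)) with htdef
  have ht0 : 0 < t := lt_min (by norm_num) (div_pos hδ (by linarith))
  have ht1 : t ≤ 1 := le_trans (min_le_left _ _) (by norm_num)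
  set c : ∀ m, S m → ℝ := fun m s => (1 - t) * σstar m s + t * σ m s with hcdef
  have hcNash : IsNashEq u c := combo_isNash u hNash hσ n₁ hag ht0.le ht1
  have hcne : c ≠ σstar := by
    intro hcontr
    apply hn₁
    funext s
    have h1 := congrFun (congrFun hcontr n₁) s
    simp only [hcdef] at h1
    have h2 : t * (σ n₁ s - σstar n₁ s) = 0 := by linear_combination h1
    rcases mul_eq_zero.mp h2 with h3 | h3
    · exact absurd h3 (ne_of_gt ht0)
    · exact sub_eq_zero.mp h3
  have hsub : c - σstar = t • (σ - σstar) := by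
    funext m s
    simp only [Pi.sub_apply, Pi.smul_apply, smul_eq_mul, hcdef]
    ring
  have hdist : dist c σstar < δ := by
    have hcalc : dist c σstar = t * dist σ σstar := by
      rw [dist_eq_norm, hsub, norm_smul, Real.norm_eq_abs, abs_of_pos ht0, dist_eq_norm]
    have hhalf : (δ / (2 * dist σ σstar)) * dist σ σstar = δ / 2 := by
      field_simp
    have : t * dist σ σstar ≤ δ / 2 := by
      rw [← hhalf]
      exact mul_le_mul_of_nonneg_right (min_le_right _ _) hd.le
    rw [hcalc]
    linarith
  exact hcne (hiso c hcNash hdist)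

set_option maxHeartbeats 1000000 in
theorem isolated_equilibrium_two_players_deviate
    (u : ∀ _ : Fin N, (∀ m, S m) → ℝ) (σstar : ∀ n, S n → ℝ)
    (hNash : IsNashEq u σstar)
    (hiso : ∃ δ > 0, ∀ σ, IsNashEq u σ → dist σ σstar < δ → σ = σstar) :
    ∃ ε > 0, ∀ σ, IsNashEq u σ → σ ≠ σstar →
      ∃ n₁ n₂ : Fin N, n₁ ≠ n₂ ∧
        (∃ s : S n₁, 0 < σstar n₁ s ∧ σ n₁ s < σstar n₁ s - ε) ∧
        (∃ s : S n₂, 0 < σstar n₂ s ∧ σ n₂ s < σstar n₂ s - ε) := by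
  obtain ⟨δ, hδ, hiso⟩ := hiso
  -- every strategy set is nonempty
  have hne : ∀ n, (Finset.univ : Finset (S n)).Nonempty := by
    intro n
    rcases Finset.eq_empty_or_nonempty (Finset.univ : Finset (S n)) with h | h
    · have h1 := hNash.1.2 n
      rw [h, Finset.sum_empty] at h1
      norm_num at h1
    · exact h
  -- per-player maximal drop
  set D : Fin N → (∀ n, S n → ℝ) → ℝ :=
    fun n σ => Finset.univ.sup' (hne n) (fun s => σstar n s - σ n s) with hDdef
  have hDcont : ∀ n, Continuous (D n) := fun n =>
    Continuous.finset_sup'_apply (hne n) fun s _ =>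
      continuous_const.sub ((continuous_apply s).comp (continuous_apply n))
  have hDpos : ∀ σ, InSimplex σ → ∀ n, σ n ≠ σstar n → 0 < D n σ := by
    intro σ hσ n hn
    rcases lt_or_ge 0 (D n σ) with h | h
    · exact h
    · exfalso
      apply hn
      have hle : ∀ s ∈ (Finset.univ : Finset (S n)), σstar n s ≤ σ n s := by
        intro s _
        have := Finset.le_sup' (fun s => σstar n s - σ n s) (Finset.mem_univ s)
        have h2 : σstar n s - σ n s ≤ D n σ := this
        linarith
      have hsum : ∑ s, σstar n s = ∑ s, σ n s := by
        rw [hσ.2 n, hNash.1.2 n]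
      have := (Finset.sum_eq_sum_iff_of_le hle).mp hsum
      funext s
      exact (this s (Finset.mem_univ s)).symm
  -- continuity of payoffs
  have hExp : ∀ n, Continuous fun σ : ∀ n, S n → ℝ => expPay u σ n := by
    intro n
    unfold expPay
    exact continuous_finset_sum _ fun s _ =>
      (continuous_finset_prod _ fun m _ =>
        (continuous_apply (s m)).comp (continuous_apply m)).mul continuous_const
  have hDev : ∀ n (a : S n), Continuous fun σ : ∀ n, S n → ℝ => devPay u σ n a := by
    intro n a
    unfold devPay
    exact (hExp n).comp (continuous_id.update n continuous_const)
  -- the compact set of "far" equilibria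
  set K : Set (∀ n, S n → ℝ) := {σ | IsNashEq u σ ∧ δ ≤ dist σ σstar} with hKdef
  have hKmem : ∀ σ, IsNashEq u σ → σ ≠ σstar → σ ∈ K := fun σ hσ hneq =>
    ⟨hσ, le_of_not_gt fun hlt => hneq (hiso σ hσ hlt)⟩
  have hKne' : ∀ σ ∈ K, σ ≠ σstar := by
    rintro σ ⟨_, hd⟩ rfl
    rw [dist_self] at hd
    linarith
  rcases K.eq_empty_or_nonempty with hK | ⟨σ₀, hσ₀⟩
  · refine ⟨1, one_pos, fun σ hσ hneq => absurd (hKmem σ hσ hneq) ?_⟩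
    rw [hK]
    exact Set.notMem_empty σ
  · -- two distinct players exist
    obtain ⟨na, nb, hab, -, -⟩ :=
      two_diff u σstar hNash hδ hiso σ₀ hσ₀.1 (hKne' σ₀ hσ₀)
    set P : Finset (Fin N × Fin N) := Finset.univ.filter (fun p => p.1 ≠ p.2) with hPdef
    have hP : P.Nonempty := ⟨(na, nb), by simp [hPdef, hab]⟩
    set F : (∀ n, S n → ℝ) → ℝ :=
      fun σ => P.sup' hP (fun p => min (D p.1 σ) (D p.2 σ)) with hFdef
    have hFcont : Continuous F :=
      Continuous.finset_sup'_apply hP fun p _ => (hDcont p.1).min (hDcont p.2)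
    -- K is compact
    have hKclosed : IsClosed K := by
      have h1 : IsClosed {σ : ∀ n, S n → ℝ | IsNashEq u σ} := by
        have hEq : {σ : ∀ n, S n → ℝ | IsNashEq u σ}
            = (⋂ n, ⋂ s, {σ : ∀ n, S n → ℝ | 0 ≤ σ n s}) ∩
              ((⋂ n, {σ : ∀ n, S n → ℝ | ∑ s, σ n s = 1}) ∩
               (⋂ n, ⋂ a : S n, {σ : ∀ n, S n → ℝ | devPay u σ n a ≤ expPay u σ n})) := by
          ext σ
          simp only [Set.mem_setOf_eq, Set.mem_inter_iff, Set.mem_iInter, IsNashEq, InSimplex]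
          tauto
        rw [hEq]
        refine IsClosed.inter ?_ (IsClosed.inter ?_ ?_)
        · exact isClosed_iInter fun n => isClosed_iInter fun s =>
            isClosed_le continuous_const ((continuous_apply s).comp (continuous_apply n))
        · exact isClosed_iInter fun n => isClosed_eq
            (continuous_finset_sum _ fun s _ => (continuous_apply s).comp (continuous_apply n))
            continuous_const
        · exact isClosed_iInter fun n => isClosed_iInter fun a =>
            isClosed_le (hDev n a) (hExp n)
      have h2 : IsClosed {σ : ∀ n, S n → ℝ | δ ≤ dist σ σstar} :=
        isClosed_le continuous_const (continuous_id.dist continuous_const)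
      exact h1.inter h2
    have hnorm1 : ∀ τ : ∀ n, S n → ℝ, InSimplex τ → ‖τ‖ ≤ 1 := by
      intro τ hτ
      rw [pi_norm_le_iff_of_nonneg zero_le_one]
      intro n
      rw [pi_norm_le_iff_of_nonneg zero_le_one]
      intro s
      rw [Real.norm_eq_abs, abs_le]
      constructor
      · linarith [hτ.1 n s]
      · calc τ n s ≤ ∑ s', τ n s' :=
            Finset.single_le_sum (fun s' _ => hτ.1 n s') (Finset.mem_univ s)
          _ = 1 := hτ.2 n
    have hKbdd : Bornology.IsBounded K := by
      apply (Metric.isBounded_closedBall (x := σstar) (r := 2)).subset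
      rintro σ ⟨hσ, -⟩
      rw [Metric.mem_closedBall, dist_eq_norm]
      calc ‖σ - σstar‖ ≤ ‖σ‖ + ‖σstar‖ := norm_sub_le _ _
        _ ≤ 1 + 1 := add_le_add (hnorm1 σ hσ.1) (hnorm1 σstar hNash.1)
        _ = 2 := by norm_num
    have hKcomp : IsCompact K := Metric.isCompact_of_isClosed_isBounded hKclosed hKbdd
    obtain ⟨σmin, hσminK, hFmin'⟩ := hKcomp.exists_isMinOn ⟨σ₀, hσ₀⟩ hFcont.continuousOn
    have hFmin : ∀ σ ∈ K, F σmin ≤ F σ := fun σ hσ => hFmin' hσ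
    have hFpos : 0 < F σmin := by
      obtain ⟨m₁, m₂, hm, hd1, hd2⟩ :=
        two_diff u σstar hNash hδ hiso σmin hσminK.1 (hKne' σmin hσminK)
      have hmem : (m₁, m₂) ∈ P := by simp [hPdef, hm]
      calc (0 : ℝ) < min (D m₁ σmin) (D m₂ σmin) :=
          lt_min (hDpos σmin hσminK.1.1 m₁ hd1) (hDpos σmin hσminK.1.1 m₂ hd2)
        _ ≤ F σmin :=
          Finset.le_sup' (fun p : Fin N × Fin N => min (D p.1 σmin) (D p.2 σmin)) hmem
    refine ⟨F σmin / 2, by linarith, fun σ hσ hneq => ?_⟩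
    have hσK := hKmem σ hσ hneq
    have hFσ : F σmin ≤ F σ := hFmin σ hσK
    obtain ⟨p, hpP, hpF⟩ :=
      Finset.exists_mem_eq_sup' hP (fun p => min (D p.1 σ) (D p.2 σ))
    have hp12 : p.1 ≠ p.2 := by
      have := Finset.mem_filter.mp hpP
      exact this.2
    have hmin : F σmin / 2 < min (D p.1 σ) (D p.2 σ) := by
      rw [← hpF]
      show F σmin / 2 < F σ
      linarith
    have hgoal : ∀ m : Fin N, F σmin / 2 < D m σ →
        ∃ s : S m, 0 < σstar m s ∧ σ m s < σstar m s - F σmin / 2 := by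
      intro m hm
      obtain ⟨s, -, hs⟩ :=
        Finset.exists_mem_eq_sup' (hne m) (fun s => σstar m s - σ m s)
      have hs' : F σmin / 2 < σstar m s - σ m s := by
        rw [← hs]
        exact hm
      have h0 : 0 ≤ σ m s := hσ.1.1 m s
      exact ⟨s, by linarith, by linarith⟩
    exact ⟨p.1, p.2, hp12,
      hgoal p.1 (lt_of_lt_of_le hmin (min_le_left _ _)),
      hgoal p.2 (lt_of_lt_of_le hmin (min_le_right _ _))⟩
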